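/- Let (0, a_1, ..., a_n, 0) be a concave sequence with a_i > 0 for all 1 ≤ i ≤ n. Then the sum satisfies a_1 + ... + a_n ≥ ((n+1)/2) · max_{1≤i≤n} a_i. -/

import Mathlib

/-- For a concave sequence `(0, a 1, ..., a n, 0)` (given as `b`) with positive
interior entries, the sum of the interior entries is at least `((n+1)/2)` times
their maximum. -/
theorem concave_sum_ge_half_max (n : ℕ) (b : ℕ → ℝ)
    (hb0 : b 0 = 0) (hbn : b (n + 1) = 0)
    (hpos : ∀ i, 1 ≤ i → i ≤ n → 0 < b i)
    (hconc : ∀ i, i + 2 ≤ n + 1 → b (i + 1) ≥ (b i + b (i + 2)) / 2) :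
    ∀ i, 1 ≤ i → i ≤ n →
      (∑ j ∈ Finset.Icc 1 n, b j) ≥ (((n : ℝ) + 1) / 2) * b i := by
  intro i hi1 hin
  set d : ℕ → ℝ := fun k => b (k + 1) - b k with hd
  -- differences are nonincreasing
  have hdstep : ∀ k, k + 1 ≤ n → d (k + 1) ≤ d k := by
    intro k hk
    have h := hconc k (by omega)
    simp only [hd]
    linarith
  have hdmono : ∀ k l, k ≤ l → l ≤ n → d l ≤ d k := by
    intro k l hkl
    induction l, hkl using Nat.le_induction with
    | base => intro _; exact le_rfl
    | succ m hm ih =>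
      intro hmn
      exact le_trans (hdstep m (by omega)) (ih (by omega))
  have hbsum : ∀ j, b j = ∑ k ∈ Finset.range j, d k := by
    intro j
    simp only [hd]
    rw [Finset.sum_range_sub (f := b), hb0, sub_zero]
  have hT : ∀ j, j ≤ n + 1 → ∑ k ∈ Finset.Ico j (n + 1), d k = - b j := by
    intro j hj
    rw [Finset.sum_Ico_eq_sub _ hj, ← hbsum, ← hbsum, hbn]
    ring
  -- left chord inequality
  have hleft : ∀ j, 1 ≤ j → j ≤ i → (j : ℝ) * b i ≤ (i : ℝ) * b j := by
    intro j hj1 hji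
    have h1 : (j : ℝ) * d (j - 1) ≤ ∑ k ∈ Finset.range j, d k := by
      have hm : ∀ k ∈ Finset.range j, d (j - 1) ≤ d k := by
        intro k hk
        have hk' := Finset.mem_range.mp hk
        exact hdmono k (j - 1) (by omega) (by omega)
      have := Finset.card_nsmul_le_sum (Finset.range j) d (d (j - 1)) hm
      simpa [Finset.card_range, nsmul_eq_mul] using this
    have h2 : ∑ k ∈ Finset.Ico j i, d k ≤ ((i : ℝ) - j) * d (j - 1) := by
      have hm : ∀ k ∈ Finset.Ico j i, d k ≤ d (j - 1) := by
        intro k hk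
        have hk' := Finset.mem_Ico.mp hk
        exact hdmono (j - 1) k (by omega) (by omega)
      have h := Finset.sum_le_card_nsmul (Finset.Ico j i) d (d (j - 1)) hm
      rw [Nat.card_Ico, nsmul_eq_mul, Nat.cast_sub hji] at h
      exact h
    have hsplit : ∑ k ∈ Finset.range j, d k + ∑ k ∈ Finset.Ico j i, d k
        = ∑ k ∈ Finset.range i, d k := Finset.sum_range_add_sum_Ico _ hji
    have hji' : (j : ℝ) ≤ i := Nat.cast_le.mpr hji
    have hj0 : (0 : ℝ) ≤ j := Nat.cast_nonneg j
    rw [hbsum i, hbsum j, ← hsplit]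
    nlinarith [mul_le_mul_of_nonneg_left h1 (sub_nonneg.mpr hji'),
      mul_le_mul_of_nonneg_left h2 hj0]
  -- right chord inequality
  have hright : ∀ j, i ≤ j → j ≤ n + 1 → ((n : ℝ) + 1 - j) * b i ≤ ((n : ℝ) + 1 - i) * b j := by
    intro j hij hjn
    have hj1 : 1 ≤ j := le_trans hi1 hij
    have h1 : ((j : ℝ) - i) * d (j - 1) ≤ ∑ k ∈ Finset.Ico i j, d k := by
      have hm : ∀ k ∈ Finset.Ico i j, d (j - 1) ≤ d k := by
        intro k hk
        have hk' := Finset.mem_Ico.mp hk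
        exact hdmono k (j - 1) (by omega) (by omega)
      have h := Finset.card_nsmul_le_sum (Finset.Ico i j) d (d (j - 1)) hm
      rw [Nat.card_Ico, nsmul_eq_mul, Nat.cast_sub hij] at h
      exact h
    have h2 : ∑ k ∈ Finset.Ico j (n + 1), d k ≤ ((n : ℝ) + 1 - j) * d (j - 1) := by
      have hm : ∀ k ∈ Finset.Ico j (n + 1), d k ≤ d (j - 1) := by
        intro k hk
        have hk' := Finset.mem_Ico.mp hk
        exact hdmono (j - 1) k (by omega) (by omega)
      have h := Finset.sum_le_card_nsmul (Finset.Ico j (n + 1)) d (d (j - 1)) hm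
      rw [Nat.card_Ico, nsmul_eq_mul, Nat.cast_sub hjn] at h
      push_cast at h
      linarith
    have hsplit : ∑ k ∈ Finset.Ico i j, d k + ∑ k ∈ Finset.Ico j (n + 1), d k
        = ∑ k ∈ Finset.Ico i (n + 1), d k := Finset.sum_Ico_consecutive _ hij hjn
    have hbi : b i = - (∑ k ∈ Finset.Ico i j, d k + ∑ k ∈ Finset.Ico j (n + 1), d k) := by
      rw [hsplit, hT i (by omega)]; ring
    have hbj : b j = - ∑ k ∈ Finset.Ico j (n + 1), d k := by
      rw [hT j hjn]; ring
    have hij' : (i : ℝ) ≤ j := Nat.cast_le.mpr hij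
    have hjn' : (j : ℝ) ≤ (n : ℝ) + 1 := by exact_mod_cast Nat.cast_le.mpr hjn
    rw [hbi, hbj]
    nlinarith [mul_le_mul_of_nonneg_left h1 (sub_nonneg.mpr hjn'),
      mul_le_mul_of_nonneg_left h2 (sub_nonneg.mpr hij')]
  -- Gauss sums
  have gauss : ∀ m : ℕ, ∑ j ∈ Finset.Ioc 0 m, (j : ℝ) = m * (m + 1) / 2 := by
    intro m
    induction m with
    | zero => simp
    | succ k ih =>
      rw [Finset.sum_Ioc_succ_top (Nat.zero_le k), ih]
      push_cast
      ring
  set A := ∑ j ∈ Finset.Ioc 0 i, b j with hA_def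
  set B := ∑ j ∈ Finset.Ioc i n, b j with hB_def
  have hsplitb : ∑ j ∈ Finset.Icc 1 n, b j = A + B := by
    have h1 : Finset.Icc 1 n = Finset.Ioc 0 n := by
      rw [← Finset.Icc_add_one_left_eq_Ioc]; rfl
    rw [h1, hA_def, hB_def, Finset.sum_Ioc_consecutive b (Nat.zero_le i) hin]
  have hipos : (0 : ℝ) < i := by exact_mod_cast hi1
  have hin' : (i : ℝ) ≤ n := Nat.cast_le.mpr hin
  have hnip : (0 : ℝ) < (n : ℝ) + 1 - i := by linarith
  have hA : (i : ℝ) * ((i : ℝ) + 1) / 2 * b i ≤ (i : ℝ) * A := by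
    have hs : ∑ j ∈ Finset.Ioc 0 i, (j : ℝ) * b i ≤ ∑ j ∈ Finset.Ioc 0 i, (i : ℝ) * b j := by
      apply Finset.sum_le_sum
      intro j hj
      have hj' := Finset.mem_Ioc.mp hj
      exact hleft j hj'.1 hj'.2
    rw [← Finset.sum_mul, gauss i, ← Finset.mul_sum] at hs
    calc (i : ℝ) * ((i : ℝ) + 1) / 2 * b i = (i : ℝ) * ((i : ℝ) + 1) / 2 * b i := rfl
    _ ≤ (i : ℝ) * A := hs
  have hBsum : ∑ j ∈ Finset.Ioc i n, ((n : ℝ) + 1 - j)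
      = ((n : ℝ) - i) * ((n : ℝ) - i + 1) / 2 := by
    have h2 : ∑ j ∈ Finset.Ioc i n, (j : ℝ) = (n : ℝ) * (n + 1) / 2 - (i : ℝ) * (i + 1) / 2 := by
      have h3 := Finset.sum_Ioc_consecutive (fun j : ℕ => (j : ℝ)) (Nat.zero_le i) hin
      rw [gauss i, gauss n] at h3
      linarith
    rw [Finset.sum_sub_distrib, Finset.sum_const, Nat.card_Ioc, nsmul_eq_mul,
      Nat.cast_sub hin, h2]
    ring
  have hB : ((n : ℝ) - i) * ((n : ℝ) - i + 1) / 2 * b i ≤ ((n : ℝ) + 1 - i) * B := by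
    have hs : ∑ j ∈ Finset.Ioc i n, ((n : ℝ) + 1 - j) * b i
        ≤ ∑ j ∈ Finset.Ioc i n, ((n : ℝ) + 1 - i) * b j := by
      apply Finset.sum_le_sum
      intro j hj
      have hj' := Finset.mem_Ioc.mp hj
      exact hright j (le_of_lt hj'.1) (by omega)
    rw [← Finset.sum_mul, hBsum, ← Finset.mul_sum] at hs
    exact hs
  have h1 : ((i : ℝ) + 1) / 2 * b i ≤ A := by
    rw [← mul_le_mul_iff_right₀ hipos]
    calc (i : ℝ) * (((i : ℝ) + 1) / 2 * b i) = (i : ℝ) * ((i : ℝ) + 1) / 2 * b i := by ring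
    _ ≤ (i : ℝ) * A := hA
  have h2 : ((n : ℝ) - i) / 2 * b i ≤ B := by
    rw [← mul_le_mul_iff_right₀ hnip]
    calc ((n : ℝ) + 1 - i) * (((n : ℝ) - i) / 2 * b i)
        = ((n : ℝ) - i) * ((n : ℝ) - i + 1) / 2 * b i := by ring
    _ ≤ ((n : ℝ) + 1 - i) * B := hB
  rw [hsplitb, ge_iff_le]
  have hkey : ((n : ℝ) + 1) / 2 * b i = ((i : ℝ) + 1) / 2 * b i + ((n : ℝ) - i) / 2 * b i := by
    ring
  linarith
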